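/- Let d > 0, α₀ ∈ ℝ, r(α) = √(d / cos(2(α−α₀))) for |α − α₀| < π/4, and U(α,β) = r(α)·(cos α cos β, sin α cos β, cos α sin β, sin α sin β). Let τ₁(α,β) = N(∂U/∂α(α,β)) and τ₂(α,β) = N(∂U/∂β(α,β)). Then for every continuously differentiable compactly supported vector field X : ℝ⁴ → ℝ⁴, ∫_{α₀−π/4}^{α₀+π/4} ∫_0^{2π} ( ⟨τ₁, DX(U(α,β)) τ₁⟩ + ⟨τ₂, DX(U(α,β)) τ₂⟩ ) · r(α) · √((r'(α))² + (r(α))²) dβ dα = 0. (That is, the rectifiable 2-varifold associated to ℋ² restricted to the surface range(U) is stationary.) -/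

import Mathlib

open Real MeasureTheory
open scoped RealInnerProductSpace

/-- `r^{d,α₀}(α) = √(d / cos(2(α−α₀)))`. -/
noncomputable def rr (d α₀ α : ℝ) : ℝ := Real.sqrt (d / Real.cos (2 * (α - α₀)))

/-- The surface parameterization
`U(α,β) = r(α)·(cos α cos β, sin α cos β, cos α sin β, sin α sin β)`. -/
noncomputable def U (d α₀ α β : ℝ) : EuclideanSpace ℝ (Fin 4) :=
  rr d α₀ α •
    (WithLp.toLp 2 ![Real.cos α * Real.cos β, Real.sin α * Real.cos β,
       Real.cos α * Real.sin β, Real.sin α * Real.sin β] :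
      EuclideanSpace ℝ (Fin 4))

/-- Radial unit vector `N(x) = x / ‖x‖`. -/
noncomputable def N (x : EuclideanSpace ℝ (Fin 4)) : EuclideanSpace ℝ (Fin 4) :=
  ‖x‖⁻¹ • x

/-! ### Auxiliary definitions -/

noncomputable section SMaux

open Set

abbrev E4 : Type := EuclideanSpace ℝ (Fin 4)

noncomputable def svec (x y b : ℝ) : E4 :=
  WithLp.toLp 2 ![x * Real.cos b, y * Real.cos b, x * Real.sin b, y * Real.sin b]

noncomputable def svecb (x y b : ℝ) : E4 :=
  WithLp.toLp 2 ![-(x * Real.sin b), -(y * Real.sin b), x * Real.cos b, y * Real.cos b]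

lemma svec_eq_smul (x y b : ℝ) :
    svec x y b = x • (WithLp.toLp 2 ![Real.cos b, 0, Real.sin b, 0] : E4)
      + y • (WithLp.toLp 2 ![0, Real.cos b, 0, Real.sin b] : E4) := by
  ext i; fin_cases i <;> simp [svec] <;> ring

lemma svec_eq_smul2 (x y b : ℝ) :
    svec x y b = Real.cos b • (WithLp.toLp 2 ![x, y, 0, 0] : E4)
      + Real.sin b • (WithLp.toLp 2 ![0, 0, x, y] : E4) := by
  ext i; fin_cases i <;> simp [svec] <;> ring

lemma svecb_eq_smul2 (x y b : ℝ) :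
    svecb x y b = (-Real.sin b) • (WithLp.toLp 2 ![x, y, 0, 0] : E4)
      + Real.cos b • (WithLp.toLp 2 ![0, 0, x, y] : E4) := by
  ext i; fin_cases i <;> simp [svecb] <;> ring

lemma neg_svec_eq_smul2 (x y b : ℝ) :
    -(svec x y b) = (-Real.cos b) • (WithLp.toLp 2 ![x, y, 0, 0] : E4)
      + (-Real.sin b) • (WithLp.toLp 2 ![0, 0, x, y] : E4) := by
  ext i; fin_cases i <;> simp [svec] <;> ring

lemma smul_svec (c x y b : ℝ) : c • svec x y b = svec (c * x) (c * y) b := by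
  ext i; fin_cases i <;> simp [svec] <;> ring

lemma svec_add (x y x' y' b : ℝ) :
    svec x y b + svec x' y' b = svec (x + x') (y + y') b := by
  ext i; fin_cases i <;> simp [svec] <;> ring

lemma svec_zero (b : ℝ) : svec 0 0 b = 0 := by
  ext i; fin_cases i <;> simp [svec]

lemma neg_svec (x y b : ℝ) : -(svec x y b) = svec (-x) (-y) b := by
  ext i; fin_cases i <;> simp [svec] <;> ring

lemma inner_svec (x y x' y' b : ℝ) :
    ⟪svec x y b, svec x' y' b⟫ = x * x' + y * y' := by
  simp [svec, PiLp.inner_apply, Fin.sum_univ_four]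
  linear_combination (x * x' + y * y') * Real.sin_sq_add_cos_sq b

lemma inner_svecb (x y x' y' b : ℝ) :
    ⟪svecb x y b, svecb x' y' b⟫ = x * x' + y * y' := by
  simp [svecb, PiLp.inner_apply, Fin.sum_univ_four]
  linear_combination (x * x' + y * y') * Real.sin_sq_add_cos_sq b

lemma norm_svec (x y b : ℝ) : ‖svec x y b‖ = Real.sqrt (x ^ 2 + y ^ 2) := by
  rw [EuclideanSpace.norm_eq]
  congr 1
  simp [svec, Fin.sum_univ_four, Real.norm_eq_abs, sq_abs]
  linear_combination (x ^ 2 + y ^ 2) * Real.sin_sq_add_cos_sq b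

lemma norm_svecb (x y b : ℝ) : ‖svecb x y b‖ = Real.sqrt (x ^ 2 + y ^ 2) := by
  rw [EuclideanSpace.norm_eq]
  congr 1
  simp [svecb, Fin.sum_univ_four, Real.norm_eq_abs, sq_abs]
  linear_combination (x ^ 2 + y ^ 2) * Real.sin_sq_add_cos_sq b

lemma hasDerivAt_svec_param {p q : ℝ → ℝ} {p' q' a : ℝ} (b : ℝ)
    (hp : HasDerivAt p p' a) (hq : HasDerivAt q q' a) :
    HasDerivAt (fun t => svec (p t) (q t) b) (svec p' q' b) a := by
  simp only [svec_eq_smul]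
  exact (hp.smul_const _).add (hq.smul_const _)

lemma hasDerivAt_svec_b (x y b : ℝ) :
    HasDerivAt (fun t => svec x y t) (svecb x y b) b := by
  simp only [svec_eq_smul2, svecb_eq_smul2]
  exact ((Real.hasDerivAt_cos b).smul_const _).add ((Real.hasDerivAt_sin b).smul_const _)

lemma hasDerivAt_svecb_b (x y b : ℝ) :
    HasDerivAt (fun t => svecb x y t) (-(svec x y b)) b := by
  simp only [svecb_eq_smul2, neg_svec_eq_smul2]
  exact (((Real.hasDerivAt_sin b).neg).smul_const _).add ((Real.hasDerivAt_cos b).smul_const _)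

/-- first derivative of `rr` (valid on the domain). -/
noncomputable def srd (d α₀ a : ℝ) : ℝ := rr d α₀ a * Real.tan (2 * (a - α₀))

/-- second derivative of `rr` (valid on the domain). -/
noncomputable def srdd (d α₀ a : ℝ) : ℝ :=
  rr d α₀ a * Real.tan (2 * (a - α₀)) ^ 2 + 2 * rr d α₀ a / Real.cos (2 * (a - α₀)) ^ 2

noncomputable def spp (d α₀ a : ℝ) : ℝ := rr d α₀ a * Real.cos a
noncomputable def sqq (d α₀ a : ℝ) : ℝ := rr d α₀ a * Real.sin a
noncomputable def spd (d α₀ a : ℝ) : ℝ := srd d α₀ a * Real.cos a - rr d α₀ a * Real.sin a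
noncomputable def sqd (d α₀ a : ℝ) : ℝ := srd d α₀ a * Real.sin a + rr d α₀ a * Real.cos a
noncomputable def spdd (d α₀ a : ℝ) : ℝ :=
  srdd d α₀ a * Real.cos a - 2 * srd d α₀ a * Real.sin a - rr d α₀ a * Real.cos a
noncomputable def sqdd (d α₀ a : ℝ) : ℝ :=
  srdd d α₀ a * Real.sin a + 2 * srd d α₀ a * Real.cos a - rr d α₀ a * Real.sin a

lemma U_eq (d α₀ a b : ℝ) : U d α₀ a b = svec (spp d α₀ a) (sqq d α₀ a) b := by
  ext i; fin_cases i <;> simp [U, svec, spp, sqq] <;> ring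

lemma rr_pos {d α₀ a : ℝ} (hd : 0 < d) (hc : 0 < Real.cos (2 * (a - α₀))) :
    0 < rr d α₀ a :=
  Real.sqrt_pos.2 (div_pos hd hc)

lemma rr_sq {d α₀ a : ℝ} (hd : 0 < d) (hc : 0 < Real.cos (2 * (a - α₀))) :
    rr d α₀ a ^ 2 = d / Real.cos (2 * (a - α₀)) :=
  Real.sq_sqrt (div_pos hd hc).le

lemma hasDerivAt_two_mul (α₀ a : ℝ) : HasDerivAt (fun x : ℝ => 2 * (x - α₀)) 2 a := by
  simpa using ((hasDerivAt_id a).sub_const α₀).const_mul 2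

lemma hasDerivAt_cos2 (α₀ a : ℝ) :
    HasDerivAt (fun x : ℝ => Real.cos (2 * (x - α₀))) (-Real.sin (2 * (a - α₀)) * 2) a :=
  by have := (Real.hasDerivAt_cos (2 * (a - α₀))).comp a (hasDerivAt_two_mul α₀ a); exact this

lemma hasDerivAt_rr {d α₀ a : ℝ} (hd : 0 < d) (hc : 0 < Real.cos (2 * (a - α₀))) :
    HasDerivAt (rr d α₀) (srd d α₀ a) a := by
  have h2 : HasDerivAt (fun x : ℝ => d / Real.cos (2 * (x - α₀)))
      ((0 * Real.cos (2 * (a - α₀)) - d * (-Real.sin (2 * (a - α₀)) * 2)) /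
        Real.cos (2 * (a - α₀)) ^ 2) a :=
    (hasDerivAt_const a d).div (hasDerivAt_cos2 α₀ a) hc.ne'
  have h3 := h2.sqrt (by positivity)
  have hval : (0 * Real.cos (2 * (a - α₀)) - d * (-Real.sin (2 * (a - α₀)) * 2)) /
        Real.cos (2 * (a - α₀)) ^ 2 / (2 * rr d α₀ a)
      = srd d α₀ a := by
    have hs : rr d α₀ a ^ 2 = d / Real.cos (2 * (a - α₀)) := rr_sq hd hc
    have hs0 : (rr d α₀ a) ≠ 0 := (rr_pos hd hc).ne'
    have hs2 : rr d α₀ a ^ 2 * Real.cos (2 * (a - α₀)) = d := by rw [hs]; field_simp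
    rw [srd, Real.tan_eq_sin_div_cos]
    field_simp
    linear_combination (-(2 * Real.sin (2 * (a - α₀)))) * hs2
  rw [← hval]
  exact h3

lemma hasDerivAt_srd {d α₀ a : ℝ} (hd : 0 < d) (hc : 0 < Real.cos (2 * (a - α₀))) :
    HasDerivAt (srd d α₀) (srdd d α₀ a) a := by
  have htan : HasDerivAt (fun x : ℝ => Real.tan (2 * (x - α₀)))
      (1 / Real.cos (2 * (a - α₀)) ^ 2 * 2) a :=
    by have := (Real.hasDerivAt_tan hc.ne').comp a (hasDerivAt_two_mul α₀ a); exact this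
  have h := (hasDerivAt_rr hd hc).mul htan
  have hval : srd d α₀ a * Real.tan (2 * (a - α₀)) +
      rr d α₀ a * (1 / Real.cos (2 * (a - α₀)) ^ 2 * 2) = srdd d α₀ a := by
    rw [srd, srdd]; field_simp
  rw [← hval]
  exact h

lemma hasDerivAt_spp {d α₀ a : ℝ} (hd : 0 < d) (hc : 0 < Real.cos (2 * (a - α₀))) :
    HasDerivAt (spp d α₀) (spd d α₀ a) a := by
  have h := (hasDerivAt_rr hd hc).mul (Real.hasDerivAt_cos a)
  have hval : srd d α₀ a * Real.cos a + rr d α₀ a * -Real.sin a = spd d α₀ a := by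
    rw [spd]; ring
  rw [← hval]
  exact h

lemma hasDerivAt_sqq {d α₀ a : ℝ} (hd : 0 < d) (hc : 0 < Real.cos (2 * (a - α₀))) :
    HasDerivAt (sqq d α₀) (sqd d α₀ a) a := by
  have h := (hasDerivAt_rr hd hc).mul (Real.hasDerivAt_sin a)
  have hval : srd d α₀ a * Real.sin a + rr d α₀ a * Real.cos a = sqd d α₀ a := by
    rw [sqd]
  rw [← hval]
  exact h

lemma hasDerivAt_spd {d α₀ a : ℝ} (hd : 0 < d) (hc : 0 < Real.cos (2 * (a - α₀))) :
    HasDerivAt (spd d α₀) (spdd d α₀ a) a := by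
  have h := ((hasDerivAt_srd hd hc).mul (Real.hasDerivAt_cos a)).sub
    ((hasDerivAt_rr hd hc).mul (Real.hasDerivAt_sin a))
  have hval : srdd d α₀ a * Real.cos a + srd d α₀ a * -Real.sin a -
      (srd d α₀ a * Real.sin a + rr d α₀ a * Real.cos a) = spdd d α₀ a := by
    rw [spdd]; ring
  rw [← hval]
  exact h

lemma hasDerivAt_sqd {d α₀ a : ℝ} (hd : 0 < d) (hc : 0 < Real.cos (2 * (a - α₀))) :
    HasDerivAt (sqd d α₀) (sqdd d α₀ a) a := by
  have h := ((hasDerivAt_srd hd hc).mul (Real.hasDerivAt_sin a)).add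
    ((hasDerivAt_rr hd hc).mul (Real.hasDerivAt_cos a))
  have hval : srdd d α₀ a * Real.sin a + srd d α₀ a * Real.cos a +
      (srd d α₀ a * Real.cos a + rr d α₀ a * -Real.sin a) = sqdd d α₀ a := by
    rw [sqdd]; ring
  rw [← hval]
  exact h

lemma hasDerivAt_U_fst {d α₀ a : ℝ} (hd : 0 < d) (hc : 0 < Real.cos (2 * (a - α₀))) (b : ℝ) :
    HasDerivAt (fun x => U d α₀ x b) (svec (spd d α₀ a) (sqd d α₀ a) b) a := by
  simp only [U_eq]
  exact hasDerivAt_svec_param b (hasDerivAt_spp hd hc) (hasDerivAt_sqq hd hc)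

lemma hasDerivAt_U_snd (d α₀ a b : ℝ) :
    HasDerivAt (fun t => U d α₀ a t) (svecb (spp d α₀ a) (sqq d α₀ a) b) b := by
  simp only [U_eq]
  exact hasDerivAt_svec_b _ _ b

noncomputable def Fa (d α₀ : ℝ) (X : E4 → E4) (a b : ℝ) : ℝ :=
  Real.cos (2 * (a - α₀)) * ⟪X (U d α₀ a b), svec (spd d α₀ a) (sqd d α₀ a) b⟫

noncomputable def Ga (d α₀ : ℝ) (X : E4 → E4) (a b : ℝ) : ℝ :=
  (Real.cos (2 * (a - α₀)))⁻¹ * ⟪X (U d α₀ a b), svecb (spp d α₀ a) (sqq d α₀ a) b⟫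

noncomputable def DFa (d α₀ : ℝ) (X : E4 → E4) (a b : ℝ) : ℝ :=
  -Real.sin (2 * (a - α₀)) * 2 * ⟪X (U d α₀ a b), svec (spd d α₀ a) (sqd d α₀ a) b⟫ +
    Real.cos (2 * (a - α₀)) *
      (⟪X (U d α₀ a b), svec (spdd d α₀ a) (sqdd d α₀ a) b⟫ +
        ⟪fderiv ℝ X (U d α₀ a b) (svec (spd d α₀ a) (sqd d α₀ a) b),
          svec (spd d α₀ a) (sqd d α₀ a) b⟫)

noncomputable def DGa (d α₀ : ℝ) (X : E4 → E4) (a b : ℝ) : ℝ :=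
  (Real.cos (2 * (a - α₀)))⁻¹ *
    (⟪X (U d α₀ a b), -(svec (spp d α₀ a) (sqq d α₀ a) b)⟫ +
      ⟪fderiv ℝ X (U d α₀ a b) (svecb (spp d α₀ a) (sqq d α₀ a) b),
        svecb (spp d α₀ a) (sqq d α₀ a) b⟫)

lemma hasDerivAt_Fa {d α₀ a : ℝ} {X : E4 → E4} (hX : ContDiff ℝ 1 X)
    (hd : 0 < d) (hc : 0 < Real.cos (2 * (a - α₀))) (b : ℝ) :
    HasDerivAt (fun x => Fa d α₀ X x b) (DFa d α₀ X a b) a := by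
  have hU := hasDerivAt_U_fst hd hc b
  have hXU : HasDerivAt (fun x => X (U d α₀ x b))
      (fderiv ℝ X (U d α₀ a b) (svec (spd d α₀ a) (sqd d α₀ a) b)) a :=
    ((hX.differentiable one_ne_zero) (U d α₀ a b)).hasFDerivAt.comp_hasDerivAt a hU
  have hv := hasDerivAt_svec_param b (hasDerivAt_spd hd hc) (hasDerivAt_sqd hd hc)
  have hinner := HasDerivAt.inner ℝ hXU hv
  exact (hasDerivAt_cos2 α₀ a).mul hinner

lemma hasDerivAt_Ga {d α₀ a : ℝ} {X : E4 → E4} (hX : ContDiff ℝ 1 X) (b : ℝ) :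
    HasDerivAt (fun t => Ga d α₀ X a t) (DGa d α₀ X a b) b := by
  have hU := hasDerivAt_U_snd d α₀ a b
  have hXU : HasDerivAt (fun t => X (U d α₀ a t))
      (fderiv ℝ X (U d α₀ a b) (svecb (spp d α₀ a) (sqq d α₀ a) b)) b :=
    ((hX.differentiable one_ne_zero) (U d α₀ a b)).hasFDerivAt.comp_hasDerivAt b hU
  have hv := hasDerivAt_svecb_b (spp d α₀ a) (sqq d α₀ a) b
  have hinner := HasDerivAt.inner ℝ hXU hv
  exact hinner.const_mul _

lemma srd_aux {d α₀ a : ℝ} (hd : 0 < d) (hc : 0 < Real.cos (2 * (a - α₀))) :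
    srd d α₀ a ^ 2 + rr d α₀ a ^ 2 = (rr d α₀ a / Real.cos (2 * (a - α₀))) ^ 2 := by
  rw [srd, Real.tan_eq_sin_div_cos]
  field_simp
  linear_combination (rr d α₀ a ^ 2) * Real.sin_sq_add_cos_sq (2 * (a - α₀))

lemma norm_aux {d α₀ a : ℝ} (hd : 0 < d) (hc : 0 < Real.cos (2 * (a - α₀))) :
    spd d α₀ a ^ 2 + sqd d α₀ a ^ 2 = (rr d α₀ a / Real.cos (2 * (a - α₀))) ^ 2 := by
  have e1 : spd d α₀ a ^ 2 + sqd d α₀ a ^ 2 = srd d α₀ a ^ 2 + rr d α₀ a ^ 2 := by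
    rw [spd, sqd]
    linear_combination (srd d α₀ a ^ 2 + rr d α₀ a ^ 2) * Real.sin_sq_add_cos_sq a
  rw [e1, srd_aux hd hc]

lemma spq_aux (d α₀ a : ℝ) : spp d α₀ a ^ 2 + sqq d α₀ a ^ 2 = rr d α₀ a ^ 2 := by
  rw [spp, sqq]
  linear_combination (rr d α₀ a ^ 2) * Real.sin_sq_add_cos_sq a

lemma norm_U (d α₀ a b : ℝ) : ‖U d α₀ a b‖ = rr d α₀ a := by
  rw [U_eq, norm_svec, spq_aux]
  have h0 : 0 ≤ rr d α₀ a := Real.sqrt_nonneg _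
  rw [Real.sqrt_sq h0]

lemma scalar_C1 {d α₀ a : ℝ} (hd : 0 < d) (hc : 0 < Real.cos (2 * (a - α₀))) :
    -Real.sin (2 * (a - α₀)) * 2 * spd d α₀ a +
      (Real.cos (2 * (a - α₀)) * spdd d α₀ a +
        (Real.cos (2 * (a - α₀)))⁻¹ * -(spp d α₀ a)) = 0 := by
  have hct := hc.ne'
  rw [spd, spdd, spp, srdd, srd, Real.tan_eq_sin_div_cos]
  field_simp
  linear_combination (-(rr d α₀ a * Real.cos a)) * Real.sin_sq_add_cos_sq (2 * (a - α₀))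

lemma scalar_C2 {d α₀ a : ℝ} (hd : 0 < d) (hc : 0 < Real.cos (2 * (a - α₀))) :
    -Real.sin (2 * (a - α₀)) * 2 * sqd d α₀ a +
      (Real.cos (2 * (a - α₀)) * sqdd d α₀ a +
        (Real.cos (2 * (a - α₀)))⁻¹ * -(sqq d α₀ a)) = 0 := by
  have hct := hc.ne'
  rw [sqd, sqdd, sqq, srdd, srd, Real.tan_eq_sin_div_cos]
  field_simp
  linear_combination (-(rr d α₀ a * Real.sin a)) * Real.sin_sq_add_cos_sq (2 * (a - α₀))

lemma key {d α₀ : ℝ} (hd : 0 < d) {X : E4 → E4} (hX : ContDiff ℝ 1 X)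
    {a : ℝ} (ha : a ∈ Set.Ioo (α₀ - π / 4) (α₀ + π / 4)) (b : ℝ) :
    (⟪N (deriv (fun x => U d α₀ x b) a),
        fderiv ℝ X (U d α₀ a b) (N (deriv (fun x => U d α₀ x b) a))⟫ +
     ⟪N (deriv (fun t => U d α₀ a t) b),
        fderiv ℝ X (U d α₀ a b) (N (deriv (fun t => U d α₀ a t) b))⟫) *
      (rr d α₀ a * Real.sqrt ((deriv (rr d α₀) a) ^ 2 + (rr d α₀ a) ^ 2)) =
    DFa d α₀ X a b + DGa d α₀ X a b := by
  obtain ⟨ha1, ha2⟩ := ha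
  have hc : 0 < Real.cos (2 * (a - α₀)) := by
    apply Real.cos_pos_of_mem_Ioo
    constructor <;> [linarith; linarith]
  have hct : Real.cos (2 * (a - α₀)) ≠ 0 := hc.ne'
  have hrr0 : 0 < rr d α₀ a := rr_pos hd hc
  rw [(hasDerivAt_U_fst hd hc b).deriv, (hasDerivAt_U_snd d α₀ a b).deriv,
      (hasDerivAt_rr hd hc).deriv]
  have hA : ‖svec (spd d α₀ a) (sqd d α₀ a) b‖ = rr d α₀ a / Real.cos (2 * (a - α₀)) := by
    rw [norm_svec, norm_aux hd hc, Real.sqrt_sq (by positivity)]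
  have hB : ‖svecb (spp d α₀ a) (sqq d α₀ a) b‖ = rr d α₀ a := by
    rw [norm_svecb, spq_aux, Real.sqrt_sq hrr0.le]
  have hArea : Real.sqrt (srd d α₀ a ^ 2 + rr d α₀ a ^ 2)
      = rr d α₀ a / Real.cos (2 * (a - α₀)) := by
    rw [srd_aux hd hc, Real.sqrt_sq (by positivity)]
  have hcomb : (-Real.sin (2 * (a - α₀)) * 2) • svec (spd d α₀ a) (sqd d α₀ a) b
      + (Real.cos (2 * (a - α₀)) • svec (spdd d α₀ a) (sqdd d α₀ a) b
      + (Real.cos (2 * (a - α₀)))⁻¹ • svec (-(spp d α₀ a)) (-(sqq d α₀ a)) b) = 0 := by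
    rw [smul_svec, smul_svec, smul_svec, svec_add, svec_add,
        scalar_C1 hd hc, scalar_C2 hd hc]
    exact svec_zero b
  have hzero : -Real.sin (2 * (a - α₀)) * 2 * ⟪X (U d α₀ a b), svec (spd d α₀ a) (sqd d α₀ a) b⟫
      + (Real.cos (2 * (a - α₀)) * ⟪X (U d α₀ a b), svec (spdd d α₀ a) (sqdd d α₀ a) b⟫
      + (Real.cos (2 * (a - α₀)))⁻¹ * ⟪X (U d α₀ a b), -(svec (spp d α₀ a) (sqq d α₀ a) b)⟫) = 0 := by
    rw [neg_svec, ← real_inner_smul_right, ← real_inner_smul_right, ← real_inner_smul_right,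
        ← inner_add_right, ← inner_add_right, hcomb, inner_zero_right]
  have hRHS : DFa d α₀ X a b + DGa d α₀ X a b
      = Real.cos (2 * (a - α₀)) *
          ⟪fderiv ℝ X (U d α₀ a b) (svec (spd d α₀ a) (sqd d α₀ a) b),
            svec (spd d α₀ a) (sqd d α₀ a) b⟫
        + (Real.cos (2 * (a - α₀)))⁻¹ *
          ⟪fderiv ℝ X (U d α₀ a b) (svecb (spp d α₀ a) (sqq d α₀ a) b),
            svecb (spp d α₀ a) (sqq d α₀ a) b⟫ := by
    rw [DFa, DGa]
    linear_combination hzero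
  rw [hRHS]
  simp only [N, hA, hB, hArea, _root_.map_smul, real_inner_smul_left, real_inner_smul_right]
  rw [real_inner_comm (svec (spd d α₀ a) (sqd d α₀ a) b)
        (fderiv ℝ X (U d α₀ a b) (svec (spd d α₀ a) (sqd d α₀ a) b)),
      real_inner_comm (svecb (spp d α₀ a) (sqq d α₀ a) b)
        (fderiv ℝ X (U d α₀ a b) (svecb (spp d α₀ a) (sqq d α₀ a) b))]
  field_simp

lemma svec_eq_quad (x y b : ℝ) :
    svec x y b = (x * Real.cos b) • EuclideanSpace.single (0 : Fin 4) (1:ℝ)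
      + (y * Real.cos b) • EuclideanSpace.single (1 : Fin 4) (1:ℝ)
      + (x * Real.sin b) • EuclideanSpace.single (2 : Fin 4) (1:ℝ)
      + (y * Real.sin b) • EuclideanSpace.single (3 : Fin 4) (1:ℝ) := by
  ext i
  fin_cases i <;> simp [svec, EuclideanSpace.single_apply] <;> norm_num

lemma svecb_eq_quad (x y b : ℝ) :
    svecb x y b = (-(x * Real.sin b)) • EuclideanSpace.single (0 : Fin 4) (1:ℝ)
      + (-(y * Real.sin b)) • EuclideanSpace.single (1 : Fin 4) (1:ℝ)
      + (x * Real.cos b) • EuclideanSpace.single (2 : Fin 4) (1:ℝ)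
      + (y * Real.cos b) • EuclideanSpace.single (3 : Fin 4) (1:ℝ) := by
  ext i
  fin_cases i <;> simp [svecb, EuclideanSpace.single_apply] <;> norm_num

lemma continuousOn_svec {γ : Type*} [TopologicalSpace γ] {s : Set γ} {x y w : γ → ℝ}
    (hx : ContinuousOn x s) (hy : ContinuousOn y s) (hw : ContinuousOn w s) :
    ContinuousOn (fun z => svec (x z) (y z) (w z)) s := by
  simp only [svec_eq_quad]
  have hc := Real.continuous_cos.comp_continuousOn hw
  have hs := Real.continuous_sin.comp_continuousOn hw
  exact ((((hx.mul hc).smul continuousOn_const).add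
    ((hy.mul hc).smul continuousOn_const)).add
    ((hx.mul hs).smul continuousOn_const)).add
    ((hy.mul hs).smul continuousOn_const)

lemma continuousOn_svecb {γ : Type*} [TopologicalSpace γ] {s : Set γ} {x y w : γ → ℝ}
    (hx : ContinuousOn x s) (hy : ContinuousOn y s) (hw : ContinuousOn w s) :
    ContinuousOn (fun z => svecb (x z) (y z) (w z)) s := by
  simp only [svecb_eq_quad]
  have hc := Real.continuous_cos.comp_continuousOn hw
  have hs := Real.continuous_sin.comp_continuousOn hw
  exact ((((hx.mul hs).neg.smul continuousOn_const).add
    ((hy.mul hs).neg.smul continuousOn_const)).add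
    ((hx.mul hc).smul continuousOn_const)).add
    ((hy.mul hc).smul continuousOn_const)

lemma continuous_svec {γ : Type*} [TopologicalSpace γ] {x y w : γ → ℝ}
    (hx : Continuous x) (hy : Continuous y) (hw : Continuous w) :
    Continuous (fun z => svec (x z) (y z) (w z)) := by
  simp only [svec_eq_quad]
  have hc := Real.continuous_cos.comp hw
  have hs := Real.continuous_sin.comp hw
  exact ((((hx.mul hc).smul continuous_const).add
    ((hy.mul hc).smul continuous_const)).add
    ((hx.mul hs).smul continuous_const)).add
    ((hy.mul hs).smul continuous_const)

lemma continuous_svecb {γ : Type*} [TopologicalSpace γ] {x y w : γ → ℝ}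
    (hx : Continuous x) (hy : Continuous y) (hw : Continuous w) :
    Continuous (fun z => svecb (x z) (y z) (w z)) := by
  simp only [svecb_eq_quad]
  have hc := Real.continuous_cos.comp hw
  have hs := Real.continuous_sin.comp hw
  exact ((((hx.mul hs).neg.smul continuous_const).add
    ((hy.mul hs).neg.smul continuous_const)).add
    ((hx.mul hc).smul continuous_const)).add
    ((hy.mul hc).smul continuous_const)

end SMaux

set_option maxHeartbeats 2000000 in
theorem stmt_12 (d α₀ : ℝ) (hd : 0 < d)
    (X : EuclideanSpace ℝ (Fin 4) → EuclideanSpace ℝ (Fin 4))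
    (hX : ContDiff ℝ 1 X) (hXc : HasCompactSupport X) :
    (∫ α in Set.Ioo (α₀ - π / 4) (α₀ + π / 4),
      ∫ β in Set.Ioo (0 : ℝ) (2 * π),
        (⟪N (deriv (fun a => U d α₀ a β) α),
            fderiv ℝ X (U d α₀ α β) (N (deriv (fun a => U d α₀ a β) α))⟫ +
         ⟪N (deriv (fun b => U d α₀ α b) β),
            fderiv ℝ X (U d α₀ α β) (N (deriv (fun b => U d α₀ α b) β))⟫) *
          (rr d α₀ α *
            Real.sqrt ((deriv (rr d α₀) α) ^ 2 + (rr d α₀ α) ^ 2))) = 0 := by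
  classical
  have hπ : 0 < π := Real.pi_pos
  obtain ⟨R, hR1, hXz, hDz⟩ : ∃ R : ℝ, 0 < R ∧ (∀ y : E4, R ≤ ‖y‖ → X y = 0) ∧
      (∀ y : E4, R ≤ ‖y‖ → fderiv ℝ X y = 0) := by
    obtain ⟨R₀, hR₀⟩ := hXc.isCompact.isBounded.subset_closedBall (0 : EuclideanSpace ℝ (Fin 4))
    refine ⟨max R₀ 0 + 1, by positivity, ?_, ?_⟩
    · intro y hy
      apply image_eq_zero_of_notMem_tsupport
      intro hmem
      have h1 := hR₀ hmem
      rw [Metric.mem_closedBall, dist_zero_right] at h1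
      have h2 : R₀ ≤ max R₀ 0 := le_max_left _ _
      linarith
    · intro y hy
      by_contra h
      have hy2 : y ∈ tsupport X := support_fderiv_subset ℝ (Function.mem_support.mpr h)
      have h1 := hR₀ hy2
      rw [Metric.mem_closedBall, dist_zero_right] at h1
      have h2 : R₀ ≤ max R₀ 0 := le_max_left _ _
      linarith
  obtain ⟨δ, hδ0, hδπ, h2δ⟩ : ∃ δ : ℝ, 0 < δ ∧ δ ≤ π / 8 ∧ 2 * δ ≤ d / R ^ 2 := by
    refine ⟨min (d / R ^ 2 / 2) (π / 8),
      lt_min (div_pos (div_pos hd (pow_pos hR1 2)) two_pos) (by positivity),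
      min_le_right _ _, ?_⟩
    have h := min_le_left (d / R ^ 2 / 2) (π / 8)
    linarith
  obtain ⟨a0, b0, ha0, hb0⟩ : ∃ a0 b0 : ℝ, a0 = α₀ - π / 4 ∧ b0 = α₀ + π / 4 :=
    ⟨_, _, rfl, rfl⟩
  rw [← ha0, ← hb0]
  have hcosIoo : ∀ a ∈ Set.Ioo a0 b0, 0 < Real.cos (2 * (a - α₀)) := by
    intro a ha
    obtain ⟨h1, h2⟩ := ha
    apply Real.cos_pos_of_mem_Ioo
    constructor
    · simp only [ha0] at h1; linarith
    · simp only [hb0] at h2; linarith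
  have hrrbig : ∀ a, a ∈ Set.Ioo a0 b0 → (a < a0 + δ ∨ b0 - δ < a) → R ≤ rr d α₀ a := by
    intro a ha hcase
    have hct := hcosIoo a ha
    obtain ⟨h1, h2⟩ := ha
    simp only [ha0] at h1
    simp only [hb0] at h2
    have hcos_small : Real.cos (2 * (a - α₀)) < 2 * δ := by
      rcases hcase with h | h
      · simp only [ha0] at h
        have hx : 0 ≤ π / 2 + 2 * (a - α₀) := by linarith
        have heq : Real.cos (2 * (a - α₀)) = Real.sin (π / 2 + 2 * (a - α₀)) := by
          rw [show π / 2 + 2 * (a - α₀) = π / 2 - (-(2 * (a - α₀))) by ring,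
              Real.sin_pi_div_two_sub, Real.cos_neg]
        rw [heq]
        calc Real.sin (π / 2 + 2 * (a - α₀)) ≤ π / 2 + 2 * (a - α₀) := Real.sin_le hx
          _ < 2 * δ := by linarith
      · simp only [hb0] at h
        have hx : 0 ≤ π / 2 - 2 * (a - α₀) := by linarith
        have heq : Real.cos (2 * (a - α₀)) = Real.sin (π / 2 - 2 * (a - α₀)) :=
          (Real.sin_pi_div_two_sub _).symm
        rw [heq]
        calc Real.sin (π / 2 - 2 * (a - α₀)) ≤ π / 2 - 2 * (a - α₀) := Real.sin_le hx
          _ < 2 * δ := by linarith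
    have hstep : R ^ 2 ≤ d / Real.cos (2 * (a - α₀)) := by
      rw [le_div_iff₀ hct]
      have hlt : Real.cos (2 * (a - α₀)) * R ^ 2 < (d / R ^ 2) * R ^ 2 :=
        mul_lt_mul_of_pos_right (by linarith) (pow_pos hR1 2)
      rw [div_mul_cancel₀ d (pow_ne_zero 2 hR1.ne')] at hlt
      nlinarith [hlt]
    calc R = Real.sqrt (R ^ 2) := (Real.sqrt_sq hR1.le).symm
      _ ≤ rr d α₀ a := Real.sqrt_le_sqrt hstep
  have hvanX : ∀ a, a ∈ Set.Ioo a0 b0 → (a < a0 + δ ∨ b0 - δ < a) → ∀ b : ℝ,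
      X (U d α₀ a b) = 0 ∧ fderiv ℝ X (U d α₀ a b) = 0 := by
    intro a ha hcase b
    have hnorm : R ≤ ‖U d α₀ a b‖ := by rw [norm_U]; exact hrrbig a ha hcase
    exact ⟨hXz _ hnorm, hDz _ hnorm⟩
  -- continuity on the open strip
  have hSopen : IsOpen (Set.Ioo a0 b0 ×ˢ (Set.univ : Set ℝ)) := isOpen_Ioo.prod isOpen_univ
  have hangle : Continuous fun z : ℝ × ℝ => 2 * (z.1 - α₀) := by fun_prop
  have hcos2 : Continuous fun z : ℝ × ℝ => Real.cos (2 * (z.1 - α₀)) :=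
    Real.continuous_cos.comp hangle
  have hsin2 : Continuous fun z : ℝ × ℝ => Real.sin (2 * (z.1 - α₀)) :=
    Real.continuous_sin.comp hangle
  have hcosne : ∀ z ∈ Set.Ioo a0 b0 ×ˢ (Set.univ : Set ℝ), Real.cos (2 * (z.1 - α₀)) ≠ 0 :=
    fun z hz => (hcosIoo z.1 hz.1).ne'
  have hrrS : ContinuousOn (fun z : ℝ × ℝ => rr d α₀ z.1) (Set.Ioo a0 b0 ×ˢ (Set.univ : Set ℝ)) := by
    simp only [rr]
    exact Real.continuous_sqrt.comp_continuousOn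
      (continuousOn_const.div hcos2.continuousOn hcosne)
  have htanS : ContinuousOn (fun z : ℝ × ℝ => Real.tan (2 * (z.1 - α₀)))
      (Set.Ioo a0 b0 ×ˢ (Set.univ : Set ℝ)) :=
    Real.continuousOn_tan.comp hangle.continuousOn (fun z hz => hcosne z hz)
  have hsrdS : ContinuousOn (fun z : ℝ × ℝ => srd d α₀ z.1)
      (Set.Ioo a0 b0 ×ˢ (Set.univ : Set ℝ)) := by
    simp only [srd]; exact hrrS.mul htanS
  have hsrddS : ContinuousOn (fun z : ℝ × ℝ => srdd d α₀ z.1)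
      (Set.Ioo a0 b0 ×ˢ (Set.univ : Set ℝ)) := by
    simp only [srdd]
    exact (hrrS.mul (htanS.pow 2)).add ((continuousOn_const.mul hrrS).div
      ((hcos2.pow 2).continuousOn) (fun z hz => pow_ne_zero 2 (hcosne z hz)))
  have hca : Continuous fun z : ℝ × ℝ => Real.cos z.1 := Real.continuous_cos.comp continuous_fst
  have hsa : Continuous fun z : ℝ × ℝ => Real.sin z.1 := Real.continuous_sin.comp continuous_fst
  have hsppS : ContinuousOn (fun z : ℝ × ℝ => spp d α₀ z.1)
      (Set.Ioo a0 b0 ×ˢ (Set.univ : Set ℝ)) := by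
    simp only [spp]; exact hrrS.mul hca.continuousOn
  have hsqqS : ContinuousOn (fun z : ℝ × ℝ => sqq d α₀ z.1)
      (Set.Ioo a0 b0 ×ˢ (Set.univ : Set ℝ)) := by
    simp only [sqq]; exact hrrS.mul hsa.continuousOn
  have hspdS : ContinuousOn (fun z : ℝ × ℝ => spd d α₀ z.1)
      (Set.Ioo a0 b0 ×ˢ (Set.univ : Set ℝ)) := by
    simp only [spd]; exact (hsrdS.mul hca.continuousOn).sub (hrrS.mul hsa.continuousOn)
  have hsqdS : ContinuousOn (fun z : ℝ × ℝ => sqd d α₀ z.1)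
      (Set.Ioo a0 b0 ×ˢ (Set.univ : Set ℝ)) := by
    simp only [sqd]; exact (hsrdS.mul hsa.continuousOn).add (hrrS.mul hca.continuousOn)
  have hspddS : ContinuousOn (fun z : ℝ × ℝ => spdd d α₀ z.1)
      (Set.Ioo a0 b0 ×ˢ (Set.univ : Set ℝ)) := by
    simp only [spdd]
    exact ((hsrddS.mul hca.continuousOn).sub
      ((continuousOn_const.mul hsrdS).mul hsa.continuousOn)).sub (hrrS.mul hca.continuousOn)
  have hsqddS : ContinuousOn (fun z : ℝ × ℝ => sqdd d α₀ z.1)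
      (Set.Ioo a0 b0 ×ˢ (Set.univ : Set ℝ)) := by
    simp only [sqdd]
    exact ((hsrddS.mul hsa.continuousOn).add
      ((continuousOn_const.mul hsrdS).mul hca.continuousOn)).sub (hrrS.mul hsa.continuousOn)
  have hUS : ContinuousOn (fun z : ℝ × ℝ => U d α₀ z.1 z.2)
      (Set.Ioo a0 b0 ×ˢ (Set.univ : Set ℝ)) := by
    simp only [U_eq]
    exact continuousOn_svec hsppS hsqqS continuous_snd.continuousOn
  have hXUS : ContinuousOn (fun z : ℝ × ℝ => X (U d α₀ z.1 z.2))
      (Set.Ioo a0 b0 ×ˢ (Set.univ : Set ℝ)) := hX.continuous.comp_continuousOn hUS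
  have hfdS : ContinuousOn (fun z : ℝ × ℝ => fderiv ℝ X (U d α₀ z.1 z.2))
      (Set.Ioo a0 b0 ×ˢ (Set.univ : Set ℝ)) :=
    (hX.continuous_fderiv one_ne_zero).comp_continuousOn hUS
  have hv1S : ContinuousOn (fun z : ℝ × ℝ => svec (spd d α₀ z.1) (sqd d α₀ z.1) z.2)
      (Set.Ioo a0 b0 ×ˢ (Set.univ : Set ℝ)) :=
    continuousOn_svec hspdS hsqdS continuous_snd.continuousOn
  have hv1dS : ContinuousOn (fun z : ℝ × ℝ => svec (spdd d α₀ z.1) (sqdd d α₀ z.1) z.2)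
      (Set.Ioo a0 b0 ×ˢ (Set.univ : Set ℝ)) :=
    continuousOn_svec hspddS hsqddS continuous_snd.continuousOn
  have hv2S : ContinuousOn (fun z : ℝ × ℝ => svecb (spp d α₀ z.1) (sqq d α₀ z.1) z.2)
      (Set.Ioo a0 b0 ×ˢ (Set.univ : Set ℝ)) :=
    continuousOn_svecb hsppS hsqqS continuous_snd.continuousOn
  have hv0S : ContinuousOn (fun z : ℝ × ℝ => svec (spp d α₀ z.1) (sqq d α₀ z.1) z.2)
      (Set.Ioo a0 b0 ×ˢ (Set.univ : Set ℝ)) :=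
    continuousOn_svec hsppS hsqqS continuous_snd.continuousOn
  have hDFS : ContinuousOn (fun z : ℝ × ℝ => DFa d α₀ X z.1 z.2)
      (Set.Ioo a0 b0 ×ˢ (Set.univ : Set ℝ)) := by
    simp only [DFa]
    exact (((hsin2.neg.mul continuous_const).continuousOn).mul (hXUS.inner hv1S)).add
      (hcos2.continuousOn.mul ((hXUS.inner hv1dS).add ((hfdS.clm_apply hv1S).inner hv1S)))
  have hDGS : ContinuousOn (fun z : ℝ × ℝ => DGa d α₀ X z.1 z.2)
      (Set.Ioo a0 b0 ×ˢ (Set.univ : Set ℝ)) := by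
    simp only [DGa]
    exact (hcos2.continuousOn.inv₀ hcosne).mul
      ((hXUS.inner hv0S.neg).add ((hfdS.clm_apply hv2S).inner hv2S))
  have hUb : ∀ α : ℝ, Continuous (fun b => U d α₀ α b) := fun α => by
    simp only [U_eq]
    exact continuous_svec continuous_const continuous_const continuous_id
  have hfixedF : ∀ α : ℝ, Continuous (fun b => DFa d α₀ X α b) := by
    intro α
    have h1 := hX.continuous.comp (hUb α)
    have h2 := (hX.continuous_fderiv one_ne_zero).comp (hUb α)
    have hv1 : Continuous fun b : ℝ => svec (spd d α₀ α) (sqd d α₀ α) b :=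
      continuous_svec continuous_const continuous_const continuous_id
    have hv1d : Continuous fun b : ℝ => svec (spdd d α₀ α) (sqdd d α₀ α) b :=
      continuous_svec continuous_const continuous_const continuous_id
    simp only [DFa]
    exact (continuous_const.mul (h1.inner hv1)).add
      (continuous_const.mul ((h1.inner hv1d).add ((h2.clm_apply hv1).inner hv1)))
  have hfixedG : ∀ α : ℝ, Continuous (fun b => DGa d α₀ X α b) := by
    intro α
    have h1 := hX.continuous.comp (hUb α)
    have h2 := (hX.continuous_fderiv one_ne_zero).comp (hUb α)
    have hv0 : Continuous fun b : ℝ => svec (spp d α₀ α) (sqq d α₀ α) b :=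
      continuous_svec continuous_const continuous_const continuous_id
    have hv2 : Continuous fun b : ℝ => svecb (spp d α₀ α) (sqq d α₀ α) b :=
      continuous_svecb continuous_const continuous_const continuous_id
    simp only [DGa]
    exact continuous_const.mul ((h1.inner hv0.neg).add ((h2.clm_apply hv2).inner hv2))
  have h2π0 : (0:ℝ) ≤ 2 * π := by positivity
  have hIDF : ∀ α ∈ Set.Ioo a0 b0,
      IntegrableOn (fun b => DFa d α₀ X α b) (Set.Ioo (0:ℝ) (2*π)) := fun α hα =>
    ((hfixedF α).integrableOn_Icc).mono_set Set.Ioo_subset_Icc_self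
  have hIDG : ∀ α ∈ Set.Ioo a0 b0,
      IntegrableOn (fun b => DGa d α₀ X α b) (Set.Ioo (0:ℝ) (2*π)) := fun α hα =>
    ((hfixedG α).integrableOn_Icc).mono_set Set.Ioo_subset_Icc_self
  have hGzero : ∀ α ∈ Set.Ioo a0 b0, (∫ b in Set.Ioo (0:ℝ) (2*π), DGa d α₀ X α b) = 0 := by
    intro α hα
    rw [← integral_Ioc_eq_integral_Ioo, ← intervalIntegral.integral_of_le h2π0]
    rw [intervalIntegral.integral_eq_sub_of_hasDerivAt
      (fun t _ => hasDerivAt_Ga hX t) ((hfixedG α).intervalIntegrable 0 (2*π))]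
    have hU2 : U d α₀ α (2*π) = U d α₀ α 0 := by
      ext i
      fin_cases i <;> simp [U, Real.cos_two_pi, Real.sin_two_pi]
    have hvb2 : svecb (spp d α₀ α) (sqq d α₀ α) (2*π) = svecb (spp d α₀ α) (sqq d α₀ α) 0 := by
      ext i
      fin_cases i <;> simp [svecb, Real.cos_two_pi, Real.sin_two_pi]
    simp only [Ga, hU2, hvb2, sub_self]
  have step1 : Set.EqOn
      (fun α => ∫ β in Set.Ioo (0:ℝ) (2*π),
        (⟪N (deriv (fun a => U d α₀ a β) α),
            fderiv ℝ X (U d α₀ α β) (N (deriv (fun a => U d α₀ a β) α))⟫ +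
         ⟪N (deriv (fun b => U d α₀ α b) β),
            fderiv ℝ X (U d α₀ α β) (N (deriv (fun b => U d α₀ α b) β))⟫) *
          (rr d α₀ α * Real.sqrt ((deriv (rr d α₀) α) ^ 2 + (rr d α₀ α) ^ 2)))
      (fun α => ∫ b in Set.Ioo (0:ℝ) (2*π), DFa d α₀ X α b) (Set.Ioo a0 b0) := by
    intro α hα
    simp only
    rw [setIntegral_congr_fun measurableSet_Ioo (fun b _ => key hd hX (by rw [ha0, hb0] at hα; exact hα) b),
        integral_add (hIDF α hα) (hIDG α hα), hGzero α hα, add_zero]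
  rw [setIntegral_congr_fun measurableSet_Ioo step1]
  -- Fubini
  have hintg : Integrable (Function.uncurry fun α b => DFa d α₀ X α b)
      ((volume.restrict (Set.Ioo a0 b0)).prod (volume.restrict (Set.Ioo (0:ℝ) (2*π)))) := by
    rw [Measure.prod_restrict]
    have hmeas : MeasurableSet (Set.Ioo a0 b0 ×ˢ Set.Ioo (0:ℝ) (2*π)) :=
      measurableSet_Ioo.prod measurableSet_Ioo
    have hzero1 : ∀ p : ℝ × ℝ, p.1 < a0 + δ →
        (Set.Ioo a0 b0 ×ˢ (Set.univ : Set ℝ)).indicator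
          (Function.uncurry fun α b => DFa d α₀ X α b) p = 0 := by
      intro p hp
      by_cases hmem : p ∈ Set.Ioo a0 b0 ×ˢ (Set.univ : Set ℝ)
      · rw [Set.indicator_of_mem hmem]
        obtain ⟨hx0, hx1⟩ := hvanX p.1 hmem.1 (Or.inl hp) p.2
        simp [Function.uncurry, DFa, hx0, hx1]
      · rw [Set.indicator_of_notMem hmem]
    have hzero2 : ∀ p : ℝ × ℝ, b0 - δ < p.1 →
        (Set.Ioo a0 b0 ×ˢ (Set.univ : Set ℝ)).indicator
          (Function.uncurry fun α b => DFa d α₀ X α b) p = 0 := by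
      intro p hp
      by_cases hmem : p ∈ Set.Ioo a0 b0 ×ˢ (Set.univ : Set ℝ)
      · rw [Set.indicator_of_mem hmem]
        obtain ⟨hx0, hx1⟩ := hvanX p.1 hmem.1 (Or.inr hp) p.2
        simp [Function.uncurry, DFa, hx0, hx1]
      · rw [Set.indicator_of_notMem hmem]
    have hcontI : Continuous ((Set.Ioo a0 b0 ×ˢ (Set.univ : Set ℝ)).indicator
        (Function.uncurry fun α b => DFa d α₀ X α b)) := by
      rw [continuous_iff_continuousAt]
      intro z
      rcases lt_or_ge z.1 (a0 + δ) with hz | hz1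
      · have hopen : IsOpen {p : ℝ × ℝ | p.1 < a0 + δ} := isOpen_lt continuous_fst continuous_const
        have hev : (Set.Ioo a0 b0 ×ˢ (Set.univ : Set ℝ)).indicator
            (Function.uncurry fun α b => DFa d α₀ X α b) =ᶠ[nhds z] fun _ => (0:ℝ) :=
          Filter.eventuallyEq_of_mem (hopen.mem_nhds hz) (fun p hp => hzero1 p hp)
        exact ContinuousAt.congr continuousAt_const hev.symm
      rcases lt_or_ge (b0 - δ) z.1 with hz | hz2
      · have hopen : IsOpen {p : ℝ × ℝ | b0 - δ < p.1} := isOpen_lt continuous_const continuous_fst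
        have hev : (Set.Ioo a0 b0 ×ˢ (Set.univ : Set ℝ)).indicator
            (Function.uncurry fun α b => DFa d α₀ X α b) =ᶠ[nhds z] fun _ => (0:ℝ) :=
          Filter.eventuallyEq_of_mem (hopen.mem_nhds hz) (fun p hp => hzero2 p hp)
        exact ContinuousAt.congr continuousAt_const hev.symm
      · have hzS : z ∈ Set.Ioo a0 b0 ×ˢ (Set.univ : Set ℝ) :=
          ⟨⟨by linarith, by linarith⟩, Set.mem_univ _⟩
        have hev : (Set.Ioo a0 b0 ×ˢ (Set.univ : Set ℝ)).indicator
            (Function.uncurry fun α b => DFa d α₀ X α b)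
              =ᶠ[nhds z] Function.uncurry fun α b => DFa d α₀ X α b :=
          Filter.eventuallyEq_of_mem (hSopen.mem_nhds hzS)
            (fun p hp => Set.indicator_of_mem hp _)
        exact ContinuousAt.congr (hDFS.continuousAt (hSopen.mem_nhds hzS)) hev.symm
    have hIc : IntegrableOn ((Set.Ioo a0 b0 ×ˢ (Set.univ : Set ℝ)).indicator
        (Function.uncurry fun α b => DFa d α₀ X α b))
        (Set.Icc a0 b0 ×ˢ Set.Icc (0:ℝ) (2*π)) :=
      hcontI.continuousOn.integrableOn_compact (isCompact_Icc.prod isCompact_Icc)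
    have hIo := hIc.mono_set
      (Set.prod_mono Set.Ioo_subset_Icc_self Set.Ioo_subset_Icc_self)
    exact hIo.congr_fun
      (fun p hp => Set.indicator_of_mem
        (Set.mem_prod.mpr ⟨(Set.mem_prod.mp hp).1, Set.mem_univ _⟩) _) hmeas
  rw [show (∫ α in Set.Ioo a0 b0, ∫ b in Set.Ioo (0:ℝ) (2*π), DFa d α₀ X α b)
        = ∫ b in Set.Ioo (0:ℝ) (2*π), ∫ α in Set.Ioo a0 b0, DFa d α₀ X α b from
      MeasureTheory.integral_integral_swap hintg]
  have inner0 : ∀ b : ℝ, (∫ α in Set.Ioo a0 b0, DFa d α₀ X α b) = 0 := by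
    intro b
    have hπ8 : δ / 2 < b0 - a0 := by
      simp only [ha0, hb0]; nlinarith [hδπ, hπ]
    have ha2 : a0 + δ/2 ∈ Set.Ioo a0 b0 := by
      constructor
      · linarith
      · simp only [ha0, hb0]; nlinarith [hδπ, hπ]
    have hb2 : b0 - δ/2 ∈ Set.Ioo a0 b0 := by
      constructor
      · simp only [ha0, hb0]; nlinarith [hδπ, hπ]
      · linarith
    have hle : a0 + δ/2 ≤ b0 - δ/2 := by
      simp only [ha0, hb0]; nlinarith [hδπ, hπ]
    have hvan2 : ∀ α ∈ Set.Ioo a0 b0 \ Set.Ioo (a0 + δ/2) (b0 - δ/2),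
        DFa d α₀ X α b = 0 := by
      intro α hα
      obtain ⟨hin, hout⟩ := hα
      have hcase : α < a0 + δ ∨ b0 - δ < α := by
        by_contra hcon
        push_neg at hcon
        obtain ⟨hc1, hc2⟩ := hcon
        exact hout ⟨by linarith, by linarith⟩
      obtain ⟨h0, h1⟩ := hvanX α hin hcase b
      simp [DFa, h0, h1]
    rw [setIntegral_eq_of_subset_of_ae_diff_eq_zero measurableSet_Ioo.nullMeasurableSet
        (Set.Ioo_subset_Ioo (by linarith) (by linarith))
        (MeasureTheory.ae_of_all _ hvan2)]
    rw [← integral_Ioc_eq_integral_Ioo, ← intervalIntegral.integral_of_le hle]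
    rw [intervalIntegral.integral_eq_sub_of_hasDerivAt (f := fun x => Fa d α₀ X x b)
      (fun x hx => by
        rw [Set.uIcc_of_le hle] at hx
        exact hasDerivAt_Fa hX hd (hcosIoo x ⟨by linarith [hx.1], by linarith [hx.2]⟩) b)
      (by
        apply ContinuousOn.intervalIntegrable
        intro x hx
        rw [Set.uIcc_of_le hle] at hx
        have hxS : (x, b) ∈ Set.Ioo a0 b0 ×ˢ (Set.univ : Set ℝ) :=
          ⟨⟨by linarith [hx.1], by linarith [hx.2]⟩, Set.mem_univ _⟩
        exact (hDFS.comp ((continuous_id.prodMk continuous_const).continuousOn)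
          (fun y hy => by
            rw [Set.uIcc_of_le hle] at hy
            exact ⟨⟨show a0 < y by linarith [hy.1], show y < b0 by linarith [hy.2]⟩,
              Set.mem_univ _⟩)) x
          (by rw [Set.uIcc_of_le hle]; exact hx))
      ]
    have hz1 := (hvanX (a0 + δ/2) ha2 (Or.inl (by linarith)) b).1
    have hz2 := (hvanX (b0 - δ/2) hb2 (Or.inr (by linarith)) b).1
    simp [Fa, hz1, hz2]
  rw [setIntegral_congr_fun measurableSet_Ioo
    (fun b (_ : b ∈ Set.Ioo (0:ℝ) (2*π)) => inner0 b)]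
  simp
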